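/- Let 0 ≤ ρ < 1 and φ ∈ ℝ, and let μ = (ρ cos φ, ρ sin φ) be a point in the open unit disk of ℝ². For any real numbers a ≤ b with b − a ≤ 2π, the two-dimensional Lebesgue measure of the set of points u in the closed unit disk for which there exist t ≥ 1 and θ ∈ [a, b] with μ + t•(u − μ) = (cos θ, sin θ), equals ∫_a^b (1 − ρ cos(θ − φ))/2 dθ. (Equivalently: if U is uniformly distributed on the unit disk and X is the point where the ray from μ through U meets the unit circle, then the angle Θ of X has probability density (1 − ρ cos(θ − φ))/(2π).) -/

import Mathlib

open MeasureTheory Real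

namespace ShadowAux

open Set

noncomputable def f (c₁ c₂ : ℝ) (p : ℝ × ℝ) : ℝ × ℝ :=
  (c₁ + p.2 * (Real.cos p.1 - c₁), c₂ + p.2 * (Real.sin p.1 - c₂))

noncomputable def B (c₁ c₂ : ℝ) (p : ℝ × ℝ) : ℝ × ℝ →L[ℝ] ℝ × ℝ :=
  LinearMap.toContinuousLinearMap (Matrix.toLin (Module.Basis.finTwoProd ℝ) (Module.Basis.finTwoProd ℝ)
    !![-p.2 * Real.sin p.1, Real.cos p.1 - c₁; p.2 * Real.cos p.1, Real.sin p.1 - c₂])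

lemma hasFDerivAt_f (c₁ c₂ : ℝ) (p : ℝ × ℝ) : HasFDerivAt (f c₁ c₂) (B c₁ c₂ p) p := by
  unfold f B
  rw [Matrix.toLin_finTwoProd_toContinuousLinearMap]
  convert HasFDerivAt.prodMk (𝕜 := ℝ)
    ((hasFDerivAt_const c₁ p).add (hasFDerivAt_snd.mul
      (((Real.hasDerivAt_cos p.1).comp_hasFDerivAt p hasFDerivAt_fst).sub_const c₁)))
    ((hasFDerivAt_const c₂ p).add (hasFDerivAt_snd.mul
      (((Real.hasDerivAt_sin p.1).comp_hasFDerivAt p hasFDerivAt_fst).sub_const c₂))) using 2 <;>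
  · ext v <;>
    simp [smul_smul, mul_comm, mul_assoc, mul_left_comm, add_comm, neg_mul, sub_mul, mul_sub]

lemma det_B (c₁ c₂ : ℝ) (p : ℝ × ℝ) :
    (B c₁ c₂ p).det = -p.2 * (1 - c₁ * Real.cos p.1 - c₂ * Real.sin p.1) := by
  have hpyth := Real.sin_sq_add_cos_sq p.1
  simp only [B, LinearMap.det_toContinuousLinearMap, LinearMap.det_toLin,
    Matrix.det_fin_two_of]
  linear_combination (-p.2) * hpyth

lemma injOn (c₁ c₂ : ℝ) (hc : c₁ ^ 2 + c₂ ^ 2 < 1) {a b : ℝ} (hba : b - a ≤ 2 * π) :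
    Set.InjOn (f c₁ c₂) (Ioc a b ×ˢ Ioc (0 : ℝ) 1) := by
  rintro ⟨θ₁, s₁⟩ hp ⟨θ₂, s₂⟩ hq heq
  simp only [Set.mem_prod, Set.mem_Ioc] at hp hq
  obtain ⟨⟨ha1, hb1⟩, hs10, hs11⟩ := hp
  obtain ⟨⟨ha2, hb2⟩, hs20, hs21⟩ := hq
  simp only [f, Prod.mk.injEq] at heq
  obtain ⟨e1, e2⟩ := heq
  have e1' : s₁ * (Real.cos θ₁ - c₁) = s₂ * (Real.cos θ₂ - c₁) := by linarith
  have e2' : s₁ * (Real.sin θ₁ - c₂) = s₂ * (Real.sin θ₂ - c₂) := by linarith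
  set u₁ : ℝ := Real.cos θ₂ - c₁ with hu₁
  set u₂ : ℝ := Real.sin θ₂ - c₂ with hu₂
  set t : ℝ := s₂ / s₁ with htdef
  have ht0 : 0 < t := div_pos hs20 hs10
  have hp1 : Real.cos θ₁ - c₁ = t * u₁ := by
    rw [htdef]; field_simp; linear_combination e1'
  have hp2 : Real.sin θ₁ - c₂ = t * u₂ := by
    rw [htdef]; field_simp; linear_combination e2'
  have E1 : (c₁ + t * u₁) ^ 2 + (c₂ + t * u₂) ^ 2 = 1 := by
    have hcc : c₁ + t * u₁ = Real.cos θ₁ := by linarith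
    have hss : c₂ + t * u₂ = Real.sin θ₁ := by linarith
    rw [hcc, hss]; linear_combination Real.sin_sq_add_cos_sq θ₁
  have E2 : (c₁ + u₁) ^ 2 + (c₂ + u₂) ^ 2 = 1 := by
    have hcc : c₁ + u₁ = Real.cos θ₂ := by rw [hu₁]; ring
    have hss : c₂ + u₂ = Real.sin θ₂ := by rw [hu₂]; ring
    rw [hcc, hss]; linear_combination Real.sin_sq_add_cos_sq θ₂
  have key : (t - 1) * (t * (u₁ ^ 2 + u₂ ^ 2) - (c₁ ^ 2 + c₂ ^ 2 - 1)) = 0 := by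
    linear_combination E1 - t * E2
  have ht1 : t = 1 := by
    rcases mul_eq_zero.1 key with h | h
    · linarith
    · exfalso
      have hU : 0 ≤ u₁ ^ 2 + u₂ ^ 2 := by positivity
      nlinarith
  have hss : s₂ = s₁ := by
    rw [htdef, div_eq_one_iff_eq hs10.ne'] at ht1; linarith
  have hcos : Real.cos θ₁ = Real.cos θ₂ := by rw [hu₁] at hp1; rw [ht1] at hp1; linarith
  have hsin : Real.sin θ₁ = Real.sin θ₂ := by rw [hu₂] at hp2; rw [ht1] at hp2; linarith
  have hang := Real.Angle.cos_sin_inj hcos hsin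
  rw [Real.Angle.angle_eq_iff_two_pi_dvd_sub] at hang
  obtain ⟨k, hk⟩ := hang
  have hπ := Real.pi_pos
  have h2π : (0:ℝ) < 2 * π := by linarith
  have hk1 : (k : ℝ) < 1 := by
    have : 2 * π * (k:ℝ) < 2 * π * 1 := by linarith
    exact lt_of_mul_lt_mul_left (by linarith) (le_of_lt h2π)
  have hk2 : (-1 : ℝ) < (k : ℝ) := by
    have : 2 * π * (-1:ℝ) < 2 * π * (k:ℝ) := by linarith
    exact lt_of_mul_lt_mul_left (by linarith) (le_of_lt h2π)
  have hk0 : k = 0 := by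
    have h1 : k < 1 := by exact_mod_cast hk1
    have h2 : (-1 : ℤ) < k := by exact_mod_cast hk2
    omega
  have : θ₁ = θ₂ := by rw [hk0] at hk; push_cast at hk; linarith
  simp [this, hss]

lemma image_eq (ρ φ : ℝ) (hρ0 : 0 ≤ ρ) (hρ1 : ρ < 1) (a b : ℝ) :
    {u : ℝ × ℝ | u.1 ^ 2 + u.2 ^ 2 ≤ 1 ∧
      ∃ t ≥ (1 : ℝ), ∃ θ ∈ Set.Icc a b,
        (ρ * Real.cos φ, ρ * Real.sin φ) + t • (u - (ρ * Real.cos φ, ρ * Real.sin φ))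
          = (Real.cos θ, Real.sin θ)} =
    f (ρ * Real.cos φ) (ρ * Real.sin φ) '' (Set.Icc a b ×ˢ Set.Ioc (0:ℝ) 1) := by
  set c₁ := ρ * Real.cos φ with hc₁
  set c₂ := ρ * Real.sin φ with hc₂
  clear_value c₁ c₂
  have hc : c₁ ^ 2 + c₂ ^ 2 < 1 := by
    have h : (ρ * Real.cos φ) ^ 2 + (ρ * Real.sin φ) ^ 2 = ρ ^ 2 := by
      linear_combination (ρ ^ 2) * Real.sin_sq_add_cos_sq φ
    rw [hc₁, hc₂, h]; nlinarith
  ext u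
  simp only [Set.mem_setOf_eq, Set.mem_image, Set.mem_prod, Set.mem_Icc, Set.mem_Ioc]
  constructor
  · rintro ⟨hu, t, ht, θ, hθ, heq⟩
    have ht0 : 0 < t := lt_of_lt_of_le one_pos ht
    rw [Prod.ext_iff] at heq
    simp only [Prod.fst_add, Prod.snd_add, Prod.smul_fst, Prod.smul_snd, Prod.fst_sub,
      Prod.snd_sub, smul_eq_mul] at heq
    refine ⟨(θ, t⁻¹), ⟨hθ, inv_pos.2 ht0, inv_le_one_of_one_le₀ ht⟩, ?_⟩
    unfold f
    have h1 : c₁ + t⁻¹ * (Real.cos θ - c₁) = u.1 := by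
      have hx : Real.cos θ - c₁ = t * (u.1 - c₁) := by linarith [heq.1]
      rw [hx, inv_mul_cancel_left₀ ht0.ne']; ring
    have h2 : c₂ + t⁻¹ * (Real.sin θ - c₂) = u.2 := by
      have hx : Real.sin θ - c₂ = t * (u.2 - c₂) := by linarith [heq.2]
      rw [hx, inv_mul_cancel_left₀ ht0.ne']; ring
    exact Prod.ext h1 h2
  · rintro ⟨⟨θ, s⟩, ⟨hθ, hs0, hs1⟩, rfl⟩
    refine ⟨?_, s⁻¹, ?_, θ, hθ, ?_⟩
    · unfold f
      simp only
      nlinarith [Real.sin_sq_add_cos_sq θ, hc,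
        mul_nonneg (mul_nonneg hs0.le (sub_nonneg.2 hs1))
          (by positivity : (0:ℝ) ≤ (c₁ - Real.cos θ)^2 + (c₂ - Real.sin θ)^2)]
    · rw [ge_iff_le, le_inv_comm₀ (by norm_num) hs0]
      simpa using hs1
    · unfold f
      rw [Prod.ext_iff]
      simp only [Prod.fst_add, Prod.snd_add, Prod.smul_fst, Prod.smul_snd, Prod.fst_sub,
        Prod.snd_sub, smul_eq_mul]
      constructor
      · field_simp; ring
      · field_simp; ring

end ShadowAux

open ShadowAux Set

/-- The measure of the set of points of the closed unit disk whose shadow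
(from a light source at `μ = (ρ cos φ, ρ sin φ)` in the open unit disk)
has angle in `[a, b]` equals `∫_a^b (1 - ρ cos (θ - φ))/2 dθ`. -/
theorem shadow_angle_density (ρ φ : ℝ) (hρ0 : 0 ≤ ρ) (hρ1 : ρ < 1)
    (a b : ℝ) (hab : a ≤ b) (hba : b - a ≤ 2 * π) :
    (volume {u : ℝ × ℝ | u.1 ^ 2 + u.2 ^ 2 ≤ 1 ∧
      ∃ t ≥ (1 : ℝ), ∃ θ ∈ Set.Icc a b,
        (ρ * Real.cos φ, ρ * Real.sin φ) + t • (u - (ρ * Real.cos φ, ρ * Real.sin φ))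
          = (Real.cos θ, Real.sin θ)}).toReal
      = ∫ θ in a..b, (1 - ρ * Real.cos (θ - φ)) / 2 := by
  set c₁ := ρ * Real.cos φ with hc₁
  set c₂ := ρ * Real.sin φ with hc₂
  have hc : c₁ ^ 2 + c₂ ^ 2 < 1 := by
    have h : (ρ * Real.cos φ) ^ 2 + (ρ * Real.sin φ) ^ 2 = ρ ^ 2 := by
      linear_combination (ρ ^ 2) * Real.sin_sq_add_cos_sq φ
    rw [hc₁, hc₂, h]; nlinarith
  have hSeq := image_eq ρ φ hρ0 hρ1 a b
  rw [hSeq]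
  have hA : MeasurableSet (Icc a b ×ˢ Ioc (0:ℝ) 1) := measurableSet_Icc.prod measurableSet_Ioc
  have hA' : MeasurableSet (Ioc a b ×ˢ Ioc (0:ℝ) 1) := measurableSet_Ioc.prod measurableSet_Ioc
  have hder : ∀ s : Set (ℝ × ℝ), ∀ p ∈ s, HasFDerivWithinAt (f c₁ c₂) (B c₁ c₂ p) s p :=
    fun s p _ => (hasFDerivAt_f c₁ c₂ p).hasFDerivWithinAt
  -- the null boundary strip
  have hnull : volume (({a} : Set ℝ) ×ˢ Ioc (0:ℝ) 1) = 0 := by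
    rw [Measure.volume_eq_prod, Measure.prod_prod, Real.volume_singleton, zero_mul]
  have hae : (Icc a b ×ˢ Ioc (0:ℝ) 1 : Set (ℝ × ℝ)) =ᵐ[volume] Ioc a b ×ˢ Ioc (0:ℝ) 1 := by
    rw [MeasureTheory.ae_eq_set]
    constructor
    · refine measure_mono_null ?_ hnull
      rintro ⟨x, y⟩ ⟨⟨hx, hy⟩, hn⟩
      simp only [Set.mem_prod, Set.mem_Ioc, Set.mem_Icc, not_and, not_le, not_lt] at hx hy hn ⊢
      refine ⟨?_, hy⟩
      by_contra hxa
      have hax : a < x := lt_of_le_of_ne hx.1 (Ne.symm hxa)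
      exact absurd (hn ⟨hax, hx.2⟩ hy.1) (not_lt.2 hy.2)
    · rw [Set.diff_eq_empty.2 (Set.prod_mono Set.Ioc_subset_Icc_self subset_rfl)]
      exact measure_empty
  -- the measure of the image equals the Jacobian integral
  have hvol : volume (f c₁ c₂ '' (Icc a b ×ˢ Ioc (0:ℝ) 1))
      = ∫⁻ p in Icc a b ×ˢ Ioc (0:ℝ) 1, ENNReal.ofReal |(B c₁ c₂ p).det| := by
    refine le_antisymm (addHaar_image_le_lintegral_abs_det_fderiv volume hA (hder _)) ?_
    calc ∫⁻ p in Icc a b ×ˢ Ioc (0:ℝ) 1, ENNReal.ofReal |(B c₁ c₂ p).det|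
        = ∫⁻ p in Ioc a b ×ˢ Ioc (0:ℝ) 1, ENNReal.ofReal |(B c₁ c₂ p).det| :=
          setLIntegral_congr hae
      _ = volume (f c₁ c₂ '' (Ioc a b ×ˢ Ioc (0:ℝ) 1)) :=
          lintegral_abs_det_fderiv_eq_addHaar_image volume hA' (hder _) (injOn c₁ c₂ hc hba)
      _ ≤ volume (f c₁ c₂ '' (Icc a b ×ˢ Ioc (0:ℝ) 1)) :=
          measure_mono (Set.image_mono
            (Set.prod_mono Set.Ioc_subset_Icc_self subset_rfl))
  -- identify the Jacobian with the density
  set g : ℝ × ℝ → ℝ := fun p => (1 - ρ * Real.cos (p.1 - φ)) * p.2 with hg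
  have hXnn : ∀ x : ℝ, 0 ≤ 1 - ρ * Real.cos (x - φ) := fun x => by
    nlinarith [Real.cos_le_one (x - φ), Real.neg_one_le_cos (x - φ)]
  have habs : ∀ p ∈ Icc a b ×ˢ Ioc (0:ℝ) 1, |(B c₁ c₂ p).det| = g p := by
    rintro ⟨x, y⟩ ⟨hx, hy⟩
    simp only [Set.mem_Ioc] at hy
    rw [det_B]
    have hrw : 1 - c₁ * Real.cos x - c₂ * Real.sin x = 1 - ρ * Real.cos (x - φ) := by
      rw [hc₁, hc₂, Real.cos_sub]; ring
    simp only [hg]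
    rw [show (-(y:ℝ)) * (1 - c₁ * Real.cos x - c₂ * Real.sin x)
        = -(y * (1 - ρ * Real.cos (x - φ))) by rw [← hrw]; ring]
    rw [abs_neg, abs_of_nonneg (mul_nonneg hy.1.le (hXnn x))]
    ring
  have hlint : (∫⁻ p in Icc a b ×ˢ Ioc (0:ℝ) 1, ENNReal.ofReal |(B c₁ c₂ p).det|)
      = ∫⁻ p in Icc a b ×ˢ Ioc (0:ℝ) 1, ENNReal.ofReal (g p) := by
    refine setLIntegral_congr_fun hA (fun p hp => ?_)
    rw [habs p hp]
  -- integrability and positivity of g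
  have hgc : Continuous g := by fun_prop
  have hgint : IntegrableOn g (Icc a b ×ˢ Ioc (0:ℝ) 1) volume := by
    have h2 : IntegrableOn g (Icc a b ×ˢ Icc (0:ℝ) 1) volume :=
      hgc.continuousOn.integrableOn_compact (isCompact_Icc.prod isCompact_Icc)
    exact h2.mono_set (Set.prod_mono subset_rfl Set.Ioc_subset_Icc_self)
  have hgnn : 0 ≤ᵐ[volume.restrict (Icc a b ×ˢ Ioc (0:ℝ) 1)] g := by
    refine (ae_restrict_iff' hA).2 (MeasureTheory.ae_of_all _ ?_)
    rintro ⟨x, y⟩ ⟨hx, hy⟩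
    simp only [Set.mem_Ioc] at hy
    exact mul_nonneg (hXnn x) hy.1.le
  have hofReal : (∫⁻ p in Icc a b ×ˢ Ioc (0:ℝ) 1, ENNReal.ofReal (g p))
      = ENNReal.ofReal (∫ p in Icc a b ×ˢ Ioc (0:ℝ) 1, g p) :=
    (MeasureTheory.ofReal_integral_eq_lintegral_ofReal hgint hgnn).symm
  -- compute the integral of g via Fubini
  have hInt : (∫ p in Icc a b ×ˢ Ioc (0:ℝ) 1, g p)
      = (∫ θ in a..b, (1 - ρ * Real.cos (θ - φ))) * (1/2 : ℝ) := by
    rw [hg]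
    simp only []
    rw [Measure.volume_eq_prod, MeasureTheory.setIntegral_prod_mul
      (f := fun x : ℝ => 1 - ρ * Real.cos (x - φ)) (g := fun y : ℝ => y)]
    congr 1
    · rw [MeasureTheory.integral_Icc_eq_integral_Ioc, ← intervalIntegral.integral_of_le hab]
    · rw [← intervalIntegral.integral_of_le (by norm_num : (0:ℝ) ≤ 1), integral_id]
      norm_num
  have hnn2 : 0 ≤ (∫ θ in a..b, (1 - ρ * Real.cos (θ - φ))) * (1/2 : ℝ) := by
    have := intervalIntegral.integral_nonneg (μ := volume) hab (fun x _ => hXnn x)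
    linarith
  rw [hvol, hlint, hofReal, hInt, ENNReal.toReal_ofReal hnn2]
  rw [intervalIntegral.integral_div]
  ring
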